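/- For every x ∈ [0,ε], φ₂(x) = −(x−x₀)/(2√3·ε) + (x−x₀)²/(12ε²). Moreover, for every x with |x−x₀| < (3−√3)ε and x ∈ [0,ε], φ₁ has the convergent power series representation φ₁(x) = Σ_{j=0}^∞ b_j (x−x₀)^j with b_j = 6·(−1)^{j+1}·ε^{−j}·(j² + √3·j + √3 − 1)/(3−√3)^{j+3}. Consequently, the indicial polynomial P(α) = a₁·α(α−1) + b₀·α with a₁ = −1/(2√3·ε) and b₀ = −6(√3−1)/(3−√3)³ has exactly the two roots α = 0 and α = 1 − (4+2√3)ε. -/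

import Mathlib

open Real Set Filter Topology MeasureTheory

/-- The degenerate point `x₀ = (2 − √3)ε`. -/
noncomputable def x0 (ε : ℝ) : ℝ := (2 - Real.sqrt 3) * ε

/-- Leading coefficient `φ₂` of `D_ε` on the interval. -/
noncomputable def phi2 (ε x : ℝ) : ℝ :=
  if x ≤ ε then (1/12) * (1 - 4*(x/ε) + (x/ε)^2)
  else if x ≤ 1 - ε then -(1/6)
  else (1/12) * (1 - 4*((1-x)/ε) + ((1-x)/ε)^2)

/-- First-order coefficient `φ₁` of `D_ε` on the interval. -/
noncomputable def phi1 (ε x : ℝ) : ℝ :=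
  if x ≤ ε then -6 * (1 - x/ε) * ((1 + x/ε)^3)⁻¹
  else if x ≤ 1 - ε then 0
  else 6 * (1 - (1-x)/ε) * ((1 + (1-x)/ε)^3)⁻¹

/-- Integration-factor function `g` on `[0, ε]`. -/
noncomputable def gfun (ε x : ℝ) : ℝ :=
  Real.sign (x - x0 ε) * |x - x0 ε| ^ ((4 + 2*Real.sqrt 3) * ε) *
    |x - 4*ε + x0 ε| ^ ((4 - 2*Real.sqrt 3) * ε) *
    (x + ε) ^ (-(8*ε)) *
    Real.exp (12*ε^3/(ε+x)^2 + 12*ε^2/(ε+x))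

/-- Sturm–Liouville principal coefficient `p`. -/
noncomputable def pfun (ε x : ℝ) : ℝ :=
  if x ≤ ε then gfun ε x / (6 * gfun ε ε)
  else if x ≤ 1 - ε then 1/6
  else gfun ε (1-x) / (6 * gfun ε ε)

/-- Sturm–Liouville weight `w = -p/φ₂`. -/
noncomputable def wfun (ε x : ℝ) : ℝ := -pfun ε x / phi2 ε x

theorem stmt4 (ε : ℝ) (hε : ε ∈ Ioo (0:ℝ) (1/2)) :
    (∀ x ∈ Icc (0:ℝ) ε,
      phi2 ε x = -(x - x0 ε)/(2*Real.sqrt 3*ε) + (x - x0 ε)^2/(12*ε^2)) ∧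
    (∀ x ∈ Icc (0:ℝ) ε, |x - x0 ε| < (3 - Real.sqrt 3)*ε →
      HasSum
        (fun j : ℕ =>
          (6 * (-1:ℝ)^(j+1) * (ε^j)⁻¹ *
            (((j:ℝ)^2 + Real.sqrt 3 * (j:ℝ) + Real.sqrt 3 - 1) /
              (3 - Real.sqrt 3)^(j+3))) * (x - x0 ε)^j)
        (phi1 ε x)) ∧
    (∀ α : ℝ,
      (-(1/(2*Real.sqrt 3*ε))) * α * (α - 1) +
        (-(6 * (Real.sqrt 3 - 1) / (3 - Real.sqrt 3)^3)) * α = 0 ↔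
      α = 0 ∨ α = 1 - (4 + 2*Real.sqrt 3)*ε) := by

  obtain ⟨hε0, hε2⟩ := hε
  have hs : Real.sqrt 3 ^ 2 = 3 := Real.sq_sqrt (by norm_num)
  have hsnn := Real.sqrt_nonneg 3
  have hs1 : 1 < Real.sqrt 3 := by nlinarith
  have hs3 : Real.sqrt 3 < 3 := by nlinarith
  have hs0 : Real.sqrt 3 ≠ 0 := by linarith
  have hc0 : (3 : ℝ) - Real.sqrt 3 ≠ 0 := by linarith
  have hεne : ε ≠ 0 := ne_of_gt hε0
  refine ⟨?_, ?_, ?_⟩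
  · intro x hx
    rw [phi2, if_pos hx.2, x0]
    field_simp
    linear_combination (-4*ε*x - 2*ε^2*Real.sqrt 3 + 8*ε^2) * hs
  · intro x hx hlt
    set s := Real.sqrt 3 with hsdef
    set t := x - x0 ε with ht
    set r : ℝ := -(t / (ε * (3 - s))) with hrdef
    have hεc : (0:ℝ) < ε * (3 - s) := by nlinarith
    have hrnorm : ‖r‖ < 1 := by
      rw [norm_eq_abs, hrdef, abs_neg, abs_div, abs_of_pos hεc, div_lt_one hεc]
      calc |t| < (3 - s) * ε := hlt
        _ = ε * (3 - s) := by ring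
    have S2 := hasSum_choose_mul_geometric_of_norm_lt_one 2 hrnorm
    have S1 := hasSum_choose_mul_geometric_of_norm_lt_one 1 hrnorm
    have S := (S2.mul_left (-12/(3-s)^3)).add (S1.mul_left (6/(3-s)^2))
    have hxε : (0:ℝ) < x + ε := by nlinarith [hx.1]
    have h1r : 1 - r = (x + ε) / (ε * (3 - s)) := by
      rw [hrdef, ht, x0]; field_simp; ring
    have key : ∀ {f g : ℕ → ℝ} {a b : ℝ}, f = g → a = b → HasSum g b → HasSum f a := by
      intro f g a b hf ha h; subst hf; subst ha; exact h
    refine key ?_ ?_ S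
    · funext j
      have hch : ((j+2).choose 2 : ℝ) = ((j:ℝ)+2) * ((j:ℝ)+1) / 2 := by
        rw [Nat.cast_choose_two]; push_cast; ring
      have hch1 : ((j+1).choose 1 : ℝ) = (j:ℝ)+1 := by
        rw [Nat.choose_one_right]; push_cast; ring
      have hrj : r ^ j = (-1)^j * t^j / (ε^j * (3-s)^j) := by
        rw [hrdef, neg_eq_neg_one_mul, mul_pow, div_pow, mul_pow]; ring
      rw [hch, hch1, hrj, pow_succ, pow_add]
      have hej : (ε:ℝ)^j ≠ 0 := pow_ne_zero _ hεne
      have hcj : ((3:ℝ)-s)^j ≠ 0 := pow_ne_zero _ hc0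
      field_simp
      ring
    · rw [phi1, if_pos hx.2, h1r]
      have h1x : 1 + x/ε = (x+ε)/ε := by field_simp; ring
      rw [h1x]
      have hxe : x + ε ≠ 0 := ne_of_gt hxε
      have hec : ε * (3 - s) ≠ 0 := ne_of_gt hεc
      norm_num only [div_pow, one_div, inv_div, mul_pow]
      field_simp
      ring
  · have ha : (-(1/(2*Real.sqrt 3*ε))) ≠ 0 := by
      simp only [ne_eq, neg_eq_zero, div_eq_zero_iff]
      push_neg
      constructor
      · norm_num
      · positivity
    have hb : (-(6 * (Real.sqrt 3 - 1) / (3 - Real.sqrt 3)^3))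
        = (-(1/(2*Real.sqrt 3*ε))) * ((4 + 2*Real.sqrt 3)*ε) := by
      field_simp
      linear_combination (-2*Real.sqrt 3^2 + 14*Real.sqrt 3 - 36) * hs
    intro α
    constructor
    · intro h
      have h2 : α * ((-(1/(2*Real.sqrt 3*ε))) * (α - (1 - (4 + 2*Real.sqrt 3)*ε))) = 0 := by
        linear_combination h - α * hb
      rcases mul_eq_zero.mp h2 with h3 | h3
      · exact Or.inl h3
      · rcases mul_eq_zero.mp h3 with h4 | h4
        · exact absurd h4 ha
        · exact Or.inr (by linarith [sub_eq_zero.mp h4])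
    · rintro (rfl | rfl)
      · ring
      · linear_combination (1 - (4 + 2*Real.sqrt 3)*ε) * hb
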